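/- For every λ > 0, the map φ_λ is injective and 𝔤 = φ_λ(𝔨) ⊕ 𝔭 as real vector spaces; equivalently, the composition of φ_λ with the quotient projection 𝔤 → 𝔤/𝔭 is an ℝ-linear isomorphism from 𝔨 onto 𝔤/𝔭. -/

import Mathlib

open Matrix Complex

noncomputable section

/-- The 3×3 matrix J with J₀₂ = J₁₁ = J₂₀ = 1 and all other entries 0. -/
def Jm : Matrix (Fin 3) (Fin 3) ℂ := !![0,0,1;0,1,0;1,0,0]

/-- The real Lie algebra 𝔤 = su(2,1) = {A : Aᴴ·J + J·A = 0, tr A = 0}. -/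
def su21 : Set (Matrix (Fin 3) (Fin 3) ℂ) :=
  {A | Aᴴ * Jm + Jm * A = 0 ∧ A.trace = 0}

/-- The real Lie algebra 𝔨 = su(2). -/
def su2 : Set (Matrix (Fin 2) (Fin 2) ℂ) :=
  {X | Xᴴ = -X ∧ X.trace = 0}

/-- The element X(t,z) of su(2), with rows (i·t, -conj z) and (z, -i·t). -/
def Xk (t : ℝ) (z : ℂ) : Matrix (Fin 2) (Fin 2) ℂ :=
  !![Complex.I * t, -(starRingEnd ℂ) z; z, -(Complex.I * t)]

/-- The matrix φ_λ(X(t,u+iv)) from Theorem 3.3 of the paper. -/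
def phiE (l t u v : ℝ) : Matrix (Fin 3) (Fin 3) ℂ :=
  !![(((1+l^2)/(4*l) : ℝ) : ℂ) * (Complex.I * t),
     -((((5-3*l^2)/(4*Real.sqrt l)) : ℝ) : ℂ) * u
       - ((((3-5*l^2)/(4*l*Real.sqrt l)) : ℝ) : ℂ) * (Complex.I * v),
     ((((-15+34*l^2-15*l^4)/(16*l^2)) : ℝ) : ℂ) * (Complex.I * t);
     ((Real.sqrt l : ℝ) : ℂ) * u + (((1/Real.sqrt l) : ℝ) : ℂ) * (Complex.I * v),
     -((((1+l^2)/(2*l)) : ℝ) : ℂ) * (Complex.I * t),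
     ((((5-3*l^2)/(4*Real.sqrt l)) : ℝ) : ℂ) * u
       - ((((3-5*l^2)/(4*l*Real.sqrt l)) : ℝ) : ℂ) * (Complex.I * v);
     Complex.I * t,
     -((Real.sqrt l : ℝ) : ℂ) * u + (((1/Real.sqrt l) : ℝ) : ℂ) * (Complex.I * v),
     (((1+l^2)/(4*l) : ℝ) : ℂ) * (Complex.I * t)]

/-- The ℝ-linear map φ_λ, written as a map on 2×2 matrices: for X ∈ su(2) we have
X = X(t,z) with t = (X₀₀).im and z = X₁₀, and φ_λ(X(t,u+iv)) = `phiE l t u v`. -/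
def phiMap (l : ℝ) (X : Matrix (Fin 2) (Fin 2) ℂ) : Matrix (Fin 3) (Fin 3) ℂ :=
  phiE l (X 0 0).im (X 1 0).re (X 1 0).im

/-- 𝔭 = {A ∈ 𝔤 : A₁₀ = A₂₀ = A₂₁ = 0}. -/
def pSub : Set (Matrix (Fin 3) (Fin 3) ℂ) :=
  {A ∈ su21 | A 1 0 = 0 ∧ A 2 0 = 0 ∧ A 2 1 = 0}


set_option maxHeartbeats 2000000

lemma phiE_mem (l t u v : ℝ) : phiE l t u v ∈ su21 := by
  constructor
  · ext i j
    fin_cases i <;> fin_cases j <;>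
      simp [phiE, Jm, Matrix.mul_apply, Fin.sum_univ_three, Matrix.conjTranspose_apply,
          Complex.conj_ofReal, Matrix.vecHead, Matrix.vecTail,
          -Complex.ofReal_pow, -Complex.ofReal_div] <;>
      push_cast <;> ring
  · simp [phiE, Matrix.trace_fin_three, -Complex.ofReal_pow, -Complex.ofReal_div]
    push_cast
    ring

lemma su21_sub {A B : Matrix (Fin 3) (Fin 3) ℂ} (hA : A ∈ su21) (hB : B ∈ su21) :
    A - B ∈ su21 := by
  obtain ⟨h1, h2⟩ := hA
  obtain ⟨h3, h4⟩ := hB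
  constructor
  · rw [Matrix.conjTranspose_sub, sub_mul, mul_sub,
      eq_neg_of_add_eq_zero_left h1, eq_neg_of_add_eq_zero_left h3]
    abel
  · rw [Matrix.trace_sub, h2, h4, sub_zero]

lemma Xk_mem (t : ℝ) (z : ℂ) : Xk t z ∈ su2 := by
  constructor
  · ext i j
    fin_cases i <;> fin_cases j <;>
      simp [Xk, Matrix.conjTranspose_apply, Complex.ext_iff]
  · simp [Xk, Matrix.trace_fin_two]

lemma su2_eq {X : Matrix (Fin 2) (Fin 2) ℂ} (hX : X ∈ su2) :
    X = Xk (X 0 0).im (X 1 0) := by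
  obtain ⟨h1, h2⟩ := hX
  have e00 : star (X 0 0) = -(X 0 0) := by
    have := congrFun (congrFun h1 0) 0
    simpa [Matrix.conjTranspose_apply] using this
  have h00re : (X 0 0).re = 0 := by
    have := congr_arg Complex.re e00
    simp at this; linarith
  have e01 : star (X 1 0) = -(X 0 1) := by
    have := congrFun (congrFun h1 0) 1
    simpa [Matrix.conjTranspose_apply] using this
  have h11 : X 1 1 = -(X 0 0) := by
    rw [Matrix.trace_fin_two] at h2
    linear_combination h2
  ext i j
  fin_cases i <;> fin_cases j
  · simp [Xk, Complex.ext_iff, h00re]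
  · rw [Complex.star_def] at e01
    simp [Xk]
    linear_combination e01
  · simp [Xk]
  · simp [Xk, h11, Complex.ext_iff, h00re]

lemma phiMap_Xk (l t : ℝ) (z : ℂ) : phiMap l (Xk t z) = phiE l t z.re z.im := by
  simp [phiMap, Xk]

lemma su21_entries {A : Matrix (Fin 3) (Fin 3) ℂ} (hA : A ∈ su21) :
    (A 2 0).re = 0 ∧ A 2 1 = -(starRingEnd ℂ) (A 1 0) := by
  have h1 := hA.1
  constructor
  · have := congrFun (congrFun h1 0) 0
    simp [Jm, Matrix.mul_apply, Fin.sum_univ_three, Matrix.conjTranspose_apply,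
      Matrix.vecMul, dotProduct, Matrix.vecHead, Matrix.vecTail] at this
    have := congr_arg Complex.re this
    simp at this; linarith
  · have := congrFun (congrFun h1 0) 1
    simp [Jm, Matrix.mul_apply, Fin.sum_univ_three, Matrix.conjTranspose_apply,
      Matrix.vecMul, dotProduct, Matrix.vecHead, Matrix.vecTail] at this
    linear_combination this

lemma phiE_10 (l t u v : ℝ) : phiE l t u v 1 0
    = (Real.sqrt l : ℂ) * u + ((1/Real.sqrt l : ℝ) : ℂ) * (Complex.I * v) := by
  simp [phiE]

lemma phiE_20 (l t u v : ℝ) : phiE l t u v 2 0 = Complex.I * t := by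
  simp [phiE]

lemma phiE_21 (l t u v : ℝ) : phiE l t u v 2 1
    = -(Real.sqrt l : ℂ) * u + ((1/Real.sqrt l : ℝ) : ℂ) * (Complex.I * v) := by
  simp [phiE]

lemma phiE_inj {l : ℝ} (hl : 0 < l) {t u v t' u' v' : ℝ}
    (h : phiE l t u v = phiE l t' u' v') : t = t' ∧ u = u' ∧ v = v' := by
  have hs : Real.sqrt l ≠ 0 := ne_of_gt (Real.sqrt_pos.2 hl)
  have h20 := congrFun (congrFun h 2) 0
  rw [phiE_20, phiE_20] at h20
  have ht : t = t' := by
    have := congr_arg Complex.im h20; simpa using this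
  have h10 := congrFun (congrFun h 1) 0
  rw [phiE_10, phiE_10] at h10
  have hu : u = u' := by
    have := congr_arg Complex.re h10
    simp [Complex.add_re] at this
    rcases this with h | h
    · exact h
    · exact absurd h hs
  have hv : v = v' := by
    have := congr_arg Complex.im h10
    simp [Complex.add_im] at this
    rcases this with h | h
    · exact h
    · exact absurd h hs
  exact ⟨ht, hu, hv⟩

/-- φ_λ is injective and 𝔤 = φ_λ(𝔨) ⊕ 𝔭 as real vector spaces. -/
theorem stmt6 (l : ℝ) (hl : 0 < l) :
    (∀ X ∈ su2, ∀ Y ∈ su2, phiMap l X = phiMap l Y → X = Y) ∧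
    (∀ A ∈ su21, ∃! q : su2 × pSub,
      A = phiMap l (q.1 : Matrix (Fin 2) (Fin 2) ℂ) + (q.2 : Matrix (Fin 3) (Fin 3) ℂ)) := by
  have hs : Real.sqrt l ≠ 0 := ne_of_gt (Real.sqrt_pos.2 hl)
  constructor
  · intro X hX Y hY h
    have h' : phiE l (X 0 0).im (X 1 0).re (X 1 0).im
        = phiE l (Y 0 0).im (Y 1 0).re (Y 1 0).im := h
    obtain ⟨ht, hu, hv⟩ := phiE_inj hl h'
    rw [su2_eq hX, su2_eq hY, ht, Complex.ext hu hv]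
  · intro A hA
    obtain ⟨h20re, h21⟩ := su21_entries hA
    set t : ℝ := (A 2 0).im with htdef
    set u : ℝ := (A 1 0).re / Real.sqrt l with hudef
    set v : ℝ := Real.sqrt l * (A 1 0).im with hvdef
    have key10 : phiE l t u v 1 0 = A 1 0 := by
      rw [phiE_10]
      apply Complex.ext
      · simp [hudef]
        field_simp
      · simp [hvdef]
        field_simp
    have key20 : phiE l t u v 2 0 = A 2 0 := by
      rw [phiE_20]
      apply Complex.ext
      · simp [h20re]
      · simp [htdef]
    have key21 : phiE l t u v 2 1 = A 2 1 := by
      rw [phiE_21, h21]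
      apply Complex.ext
      · simp [hudef]
        field_simp
      · simp [hvdef]
        field_simp
    have hXmem : Xk t (⟨u, v⟩ : ℂ) ∈ su2 := Xk_mem t _
    have hphiX : phiMap l (Xk t (⟨u, v⟩ : ℂ)) = phiE l t u v := by
      rw [phiMap_Xk]
    have hPmem : A - phiE l t u v ∈ pSub := by
      refine ⟨su21_sub hA (phiE_mem l t u v), ?_, ?_, ?_⟩ <;>
        simp [Matrix.sub_apply, key10, key20, key21]
    refine ⟨⟨⟨_, hXmem⟩, ⟨_, hPmem⟩⟩, ?_, ?_⟩
    · simp only [hphiX]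
      abel
    · rintro ⟨⟨X', hX'⟩, ⟨P', hP'⟩⟩ hq
      simp only at hq
      have hE : phiMap l X' = phiE l (X' 0 0).im (X' 1 0).re (X' 1 0).im := rfl
      have a10 : A 1 0 = phiE l (X' 0 0).im (X' 1 0).re (X' 1 0).im 1 0 := by
        rw [hq, ← hE]
        simp [Matrix.add_apply, hP'.2.1]
      have a20 : A 2 0 = phiE l (X' 0 0).im (X' 1 0).re (X' 1 0).im 2 0 := by
        rw [hq, ← hE]
        simp [Matrix.add_apply, hP'.2.2.1]
      rw [phiE_10] at a10
      rw [phiE_20] at a20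
      have ht' : (X' 0 0).im = t := by
        rw [htdef]
        have := congr_arg Complex.im a20
        simp at this
        exact this.symm
      have hu' : (X' 1 0).re = u := by
        rw [hudef]
        have := congr_arg Complex.re a10
        simp at this
        field_simp [this]
        rw [this]; ring
      have hv' : (X' 1 0).im = v := by
        rw [hvdef]
        have := congr_arg Complex.im a10
        simp at this
        field_simp [this]
        rw [this]; field_simp
      have hX'eq : X' = Xk t (⟨u, v⟩ : ℂ) := by
        have hz : X' 1 0 = (⟨u, v⟩ : ℂ) := Complex.ext hu' hv'
        rw [su2_eq hX', ht', hz]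
      have hP'eq : P' = A - phiE l t u v := by
        rw [hq, hX'eq, hphiX]
        abel
      simp only [Prod.mk.injEq, Subtype.mk.injEq]
      exact ⟨hX'eq, hP'eq⟩
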